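/- Let a_1, …, a_d be pairwise distinct letters of an alphabet A and b̃ = a_1* … a_d* the corresponding strict letter-bounded language. If L_1, L_2 ⊆ b̃ are nonempty languages and L_1 · L_2 ⊆ a_ℓ* … a_r* for some 1 ≤ ℓ ≤ r ≤ d, then there exists q with ℓ ≤ q ≤ r such that L_1 ⊆ a_ℓ* … a_q* and L_2 ⊆ a_q* … a_r*. -/

import Mathlib

namespace Paper

/-- A word over nonterminals `N` and terminals `T`. -/
abbrev Word (N T : Type) := List (N ⊕ T)

/-- A production of a grammar. -/
abbrev CProd (N T : Type) := N × Word N T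

/-- A grammar, given by its set of productions. -/
structure CFG (N T : Type) where
  prods : Set (CProd N T)

variable {N T : Type}

/-- number of occurrences of nonterminals in a word -/
def ntCount (u : Word N T) : ℕ := (u.filter (fun s => s.isLeft)).length

/-- number of occurrences of terminals in a word -/
def tCount (u : Word N T) : ℕ := (u.filter (fun s => s.isRight)).length

/-- the result of applying production `p` at position `j` of `u` -/
def applyProd (p : CProd N T) (j : ℕ) (u : Word N T) : Word N T :=
  u.take j ++ p.2 ++ u.drop (j + 1)

/-- `KSeq G k u γjs v`: a step sequence from `u` to `v` applying the indicated
productions at the indicated positions, in which every word (including `u`, `v`)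
has at most `k` occurrences of nonterminals (`k = ⊤` places no restriction). -/
inductive KSeq (G : CFG N T) (k : ℕ∞) : Word N T → List (CProd N T × ℕ) → Word N T → Prop
  | refl (u : Word N T) : (ntCount u : ℕ∞) ≤ k → KSeq G k u [] u
  | step {u v : Word N T} {p : CProd N T} {j : ℕ} {rest : List (CProd N T × ℕ)} :
      (ntCount u : ℕ∞) ≤ k → p ∈ G.prods → u[j]? = some (Sum.inl p.1) →
      KSeq G k (applyProd p j u) rest v → KSeq G k u ((p, j) :: rest) v

/-- words annotated with the index of the step at which each symbol occurrence appeared -/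
abbrev AWord (N T : Type) := List ((N ⊕ T) × ℕ)

def strip (u : AWord N T) : Word N T := u.map Prod.fst

def ntCountA (u : AWord N T) : ℕ := (u.filter (fun s => s.1.isLeft)).length

def applyProdA (p : CProd N T) (j m : ℕ) (u : AWord N T) : AWord N T :=
  u.take j ++ p.2.map (fun s => (s, m)) ++ u.drop (j + 1)

/-- the depth-first condition: position `j` carries a maximal first-appearance
index among the nonterminal occurrences of `u` -/
def dfOK (u : AWord N T) (j : ℕ) : Prop :=
  ∀ i x o, u[(i : ℕ)]? = some (Sum.inl x, o) → ∀ s oj, u[j]? = some (s, oj) → o ≤ oj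

/-- `DFSeq G k m u γjs v`: a `k`-index depth-first step sequence on annotated words,
where `m` is the index (in the whole sequence) of the current word `u`. -/
inductive DFSeq (G : CFG N T) (k : ℕ∞) : ℕ → AWord N T → List (CProd N T × ℕ) → AWord N T → Prop
  | refl (m : ℕ) (u : AWord N T) : (ntCountA u : ℕ∞) ≤ k → DFSeq G k m u [] u
  | step {m : ℕ} {u v : AWord N T} {p : CProd N T} {j o : ℕ} {rest : List (CProd N T × ℕ)} :
      (ntCountA u : ℕ∞) ≤ k → p ∈ G.prods → u[j]? = some (Sum.inl p.1, o) →
      dfOK u j →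
      DFSeq G k (m + 1) (applyProdA p j (m + 1) u) rest v →
      DFSeq G k m u ((p, j) :: rest) v

/-- `u ⇒^γ v` by a `k`-index step sequence (positions existentially quantified). -/
def CtrlSeq (G : CFG N T) (k : ℕ∞) (u : Word N T) (γ : List (CProd N T)) (v : Word N T) : Prop :=
  ∃ js : List ℕ, js.length = γ.length ∧ KSeq G k u (γ.zip js) v

/-- annotate a word as an initial word of a step sequence -/
def annot (u : Word N T) : AWord N T := u.map (fun s => (s, 0))

/-- `u ⇒^γ v` by a `k`-index depth-first step sequence starting at `u`. -/
def DFCtrlFrom (G : CFG N T) (k : ℕ∞) (u : Word N T) (γ : List (CProd N T)) (v : Word N T) :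
    Prop :=
  ∃ (js : List ℕ) (va : AWord N T),
    js.length = γ.length ∧ DFSeq G k 0 (annot u) (γ.zip js) va ∧ strip va = v

/-- embedding of terminal words -/
def tw (w : List T) : Word N T := w.map Sum.inr

/-- the sentential word `u Y v` where `u, v` are terminal and `Y` is an optional nonterminal -/
def sent (u : List T) (Y : Option N) (v : List T) : Word N T :=
  tw u ++ (Y.elim [] (fun y => [Sum.inl y])) ++ tw v

/-- `L^{(k)}_{X,Y}(G) = { u·v | X ⇒* u Y v by a k-index step sequence }`;
`Y = none` stands for `ε`. -/
def LKY (G : CFG N T) (k : ℕ∞) (X : N) (Y : Option N) : Set (List T) :=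
  {w | ∃ u v γ, w = u ++ v ∧ CtrlSeq G k [Sum.inl X] γ (sent u Y v)}

/-- `L_X(G)` -/
def Lang (G : CFG N T) (X : N) : Set (List T) := LKY G ⊤ X none

/-- `L^{(k)}_X(G)` -/
def LangK (G : CFG N T) (k : ℕ) (X : N) : Set (List T) := LKY G (k : ℕ∞) X none

/-- `Γ^{df(k)}_{X,Y}(G)`: control words of `k`-index depth-first step sequences `X ⇒^γ u Y v`. -/
def GammaDF (G : CFG N T) (k : ℕ) (X : N) (Y : Option N) : Set (List (CProd N T)) :=
  {γ | ∃ u v : List T, DFCtrlFrom G (k : ℕ∞) [Sum.inl X] γ (sent u Y v)}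

/-- `L̂_{X,Y}(Γ, G)` -/
def LHat (G : CFG N T) (Γ : Set (List (CProd N T))) (X : N) (Y : Option N) : Set (List T) :=
  {w | ∃ u v, w = u ++ v ∧ ∃ γ ∈ Γ, CtrlSeq G ⊤ [Sum.inl X] γ (sent u Y v)}

/-- the language of the bounded expression `w₁* ⋯ w_d*` -/
def BLang {α : Type} : List (List α) → Set (List α)
  | [] => {[]}
  | w :: ws => {u | ∃ (n : ℕ) (v : List α), v ∈ BLang ws ∧ u = (List.replicate n w).flatten ++ v}

/-- the words of a bounded expression must be nonempty -/
def IsBExpr {α : Type} (ws : List (List α)) : Prop := ∀ w ∈ ws, w ≠ []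

/-- the language of the letter-bounded expression `a₁* ⋯ a_d*` -/
def letterLang {α : Type} (as : List α) : Set (List α) := BLang (as.map (fun a => [a]))

/-- the language `a_i* ⋯ a_j*` (0-indexed segment of `as` from `i` to `j` inclusive) -/
def segLang {α : Type} (as : List α) (i j : ℕ) : Set (List α) :=
  letterLang ((as.drop i).take (j - i + 1))

end Paper

namespace Paper

variable {N T : Type}

/-- ranked words over the nonterminals -/
abbrev RW (N : Type) := List (N × ℕ)

/-- the set of rank values is downward closed (equivalently, of the form `{0, …, m}`
when nonempty) -/
def contiguousRanks (q : RW N) : Prop := ∀ p ∈ q, ∀ j ≤ p.2, ∃ x : N, (x, j) ∈ q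

/-- vertices of the graph `A^{df(k)}_G` -/
def IsVertex (k : ℕ) (q : RW N) : Prop :=
  q.length ≤ k ∧ contiguousRanks q ∧ List.Pairwise (· ≤ ·) (q.map Prod.snd)

/-- `w↓Ξ` : projection of a word to its nonterminals -/
def ntProj (w : Word N T) : List N := w.filterMap Sum.getLeft?

open Classical in
/-- the rank given to the nonterminals produced by a step rewriting a nonterminal
of maximal rank `i`, where `uv` is the rest of the ranked word -/
noncomputable def newRank (uv : RW N) (i : ℕ) : ℕ :=
  if uv = [] then 0 else if ∀ p ∈ uv, p.2 ≠ i then i else i + 1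

/-- the edge relation of the graph `A^{df(k)}_G` -/
def Edge (G : CFG N T) (k : ℕ) (q : RW N) (p : CProd N T) (q' : RW N) : Prop :=
  p ∈ G.prods ∧ IsVertex k q ∧ IsVertex k q' ∧
  ∃ (u v : RW N) (i : ℕ), q = u ++ [(p.1, i)] ++ v ∧ (∀ x ∈ q, x.2 ≤ i) ∧
    q' = u ++ v ++ (ntProj p.2).map (fun X => (X, newRank (u ++ v) i))

/-- paths in a labeled graph, recording the sequence of edge labels -/
inductive GPath {V E : Type} (edge : V → E → V → Prop) : V → List E → V → Prop
  | refl (v : V) : GPath edge v [] v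
  | step {v v' v'' : V} {e : E} {es : List E} :
      edge v e v' → GPath edge v' es v'' → GPath edge v (e :: es) v''

/-- paths recording the successive vertices as well -/
inductive VPath {V E : Type} (edge : V → E → V → Prop) : V → List (E × V) → Prop
  | refl (v : V) : VPath edge v []
  | step {v v' : V} {e : E} {rest : List (E × V)} :
      edge v e v' → VPath edge v' rest → VPath edge v ((e, v') :: rest)

/-- endpoint of a path starting at `q` -/
def pend {V E : Type} (q : V) (π : List (E × V)) : V := (π.map Prod.snd).getLastD q

/-- a path is acyclic iff it visits no vertex twice -/
def AcyclicFrom {V E : Type} (q : V) (π : List (E × V)) : Prop :=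
  (q :: π.map Prod.snd).Nodup

/-- `Decomp edge q pairs fin` asserts that the path obtained by concatenating, in order,
the segments of `pairs` (each an acyclic segment followed by a cycle) and `fin` is a valid
path from `q`, alternating acyclic segments `ς_j` and cycles `θ_j`. -/
def Decomp {V E : Type} (edge : V → E → V → Prop) :
    V → List (List (E × V) × List (E × V)) → List (E × V) → Prop
  | q, [], fin => VPath edge q fin ∧ AcyclicFrom q fin
  | q, (σ, θ) :: rest, fin =>
      VPath edge q σ ∧ AcyclicFrom q σ ∧
      VPath edge (pend q σ) θ ∧ pend (pend q σ) θ = pend q σ ∧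
      Decomp edge (pend q σ) rest fin

/-- `|γ|_a`: total number of occurrences of the terminal `a` in the right-hand
sides of the productions of the control word `γ` -/
def projCnt {A : Type} [DecidableEq A] (γ : List (CProd N A)) (a : A) : ℕ :=
  ((γ.map (fun p => p.2)).flatten.filterMap Sum.getRight?).count a

/-- `proj(γ) = a₁^{|γ|_{a₁}} ⋯ a_s^{|γ|_{a_s}}` -/
def projW {A : Type} [DecidableEq A] (as : List A) (γ : List (CProd N A)) : List A :=
  (as.map (fun a => List.replicate (projCnt γ a) a)).flatten

end Paper

namespace Paper

variable {N T : Type}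

/-- a grammar is in 2-normal form -/
def TwoNF (G : CFG N T) : Prop := ∀ p ∈ G.prods, p.2.length ≤ 2

/-- states of the automaton/grammar `G^b`: `(s, i)` encodes `q^{(s+1)}_{i+1}`,
i.e. position `i` (0-indexed) inside the block `s` (0-indexed) -/
abbrev QB : Type := ℕ × ℕ

/-- `ℓ_s`: length of the `s`-th word of the bounded expression -/
def lenB (ws : List (List T)) (s : ℕ) : ℕ := (ws.getD s []).length

/-- the `i`-th letter of the `s`-th word -/
def letterB (ws : List (List T)) (s i : ℕ) : Option T := (ws.getD s [])[i]?

/-- the productions of the grammar `G^b` generating the bounded expression `b` -/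
def DeltaB (ws : List (List T)) : Set (CProd QB T) :=
  {p | (∃ s i a, s < ws.length ∧ i + 1 < lenB ws s ∧ letterB ws s i = some a ∧
          p = ((s, i), [Sum.inr a, Sum.inl (s, i + 1)]))
     ∨ (∃ s s' a, s ≤ s' ∧ s' < ws.length ∧
          letterB ws s (lenB ws s - 1) = some a ∧
          p = ((s, lenB ws s - 1), [Sum.inr a, Sum.inl (s', 0)]))
     ∨ (∃ s, s < ws.length ∧ p = ((s, 0), ([] : Word QB T)))}

/-- the grammar `G^b` -/
def GB (ws : List (List T)) : CFG QB T := ⟨DeltaB ws⟩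

/-- nonterminals `[q X q']` of the product grammar `G^∩` -/
abbrev NI (N : Type) : Type := QB × N × QB

/-- `q ∈ Ξ^b` -/
def ValidQ (ws : List (List T)) (q : QB) : Prop :=
  q.1 < ws.length ∧ q.2 < lenB ws q.1

/-- `[q X q'] ∈ Ξ^∩`: both states valid and blocks in order -/
def ValidNI (ws : List (List T)) (n : NI N) : Prop :=
  ValidQ ws n.1 ∧ ValidQ ws n.2.2 ∧ n.1.1 ≤ n.2.2.1

/-- `q ⇒* w·q'` in `G^b` -/
def DerB (ws : List (List T)) (q : QB) (w : List T) (q' : QB) : Prop :=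
  ∃ γ, CtrlSeq (GB ws) ⊤ [Sum.inl q] γ (tw w ++ [Sum.inl q'])

/-- the productions `Δ^∩` of the product grammar `G^∩` -/
def DeltaI (G : CFG N T) (ws : List (List T)) : Set (CProd (NI N) T) :=
  {pp | ∃ (q q' : QB) (X : N), ValidNI ws (q, X, q') ∧
     ((∃ w : List T, (X, tw w) ∈ G.prods ∧ DerB ws q w q' ∧
         pp = ((q, X, q'), tw w)) ∨
      (∃ Y : N, (X, [Sum.inl Y]) ∈ G.prods ∧
         pp = ((q, X, q'), [Sum.inl ((q, Y, q') : NI N)])) ∨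
      (∃ (a : T) (Y : N) (qm : QB), (X, [Sum.inr a, Sum.inl Y]) ∈ G.prods ∧
         ((q, [Sum.inr a, Sum.inl qm]) : CProd QB T) ∈ DeltaB ws ∧ ValidNI ws (qm, Y, q') ∧
         pp = ((q, X, q'), [Sum.inr a, Sum.inl ((qm, Y, q') : NI N)])) ∨
      (∃ (a : T) (Y : N) (qm : QB), (X, [Sum.inl Y, Sum.inr a]) ∈ G.prods ∧
         ((qm, [Sum.inr a, Sum.inl q']) : CProd QB T) ∈ DeltaB ws ∧ ValidNI ws (q, Y, qm) ∧
         pp = ((q, X, q'), [Sum.inl ((q, Y, qm) : NI N), Sum.inr a])) ∨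
      (∃ (Y Z : N) (qm : QB), (X, [Sum.inl Y, Sum.inl Z]) ∈ G.prods ∧
         ValidNI ws (q, Y, qm) ∧ ValidNI ws (qm, Z, q') ∧
         pp = ((q, X, q'), [Sum.inl ((q, Y, qm) : NI N), Sum.inl ((qm, Z, q') : NI N)])))}

/-- the product grammar `G^∩` -/
def GI (G : CFG N T) (ws : List (List T)) : CFG (NI N) T := ⟨DeltaI G ws⟩

/-- `ζ` on symbols -/
def zetaS : (NI N ⊕ T) → (N ⊕ T) := Sum.map (fun n => n.2.1) id

/-- `ζ` on productions -/
def zetaP (p : CProd (NI N) T) : CProd N T := (p.1.2.1, p.2.map zetaS)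

/-- `ζ` on control words -/
def zetaC (γ : List (CProd (NI N) T)) : List (CProd N T) := γ.map zetaP

/-- the intermediate state of the (unique, shortest) two-step run of `G^b` from the
left state of `h` to its right state; when the first step wraps, the least possible
intermediate block is chosen -/
noncomputable def iotaMid (ws : List (List T)) (h : NI N) (a b : T) : QB :=
  if h.1.2 + 1 < lenB ws h.1.1 then (h.1.1, h.1.2 + 1)
  else (sInf {y : ℕ | (((h.1.1, h.1.2), [Sum.inr a, Sum.inl ((y, 0) : QB)]) : CProd QB T) ∈ DeltaB ws ∧
                (((y, 0), [Sum.inr b, Sum.inl (h.2.2 : QB)]) : CProd QB T) ∈ DeltaB ws}, 0)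

/-- `ι` on right-hand sides: relabels terminals by the indices (0-indexed) of the
blocks of `b` completed by the corresponding moves of `G^b`; `h` is the head of the
production -/
noncomputable def iotaRhs (ws : List (List T)) (h : NI N) :
    Word (NI N) T → Word (NI N) ℕ
  | [] => []
  | [Sum.inr _] => if h.2.2.2 = 0 then [Sum.inr h.1.1] else []
  | [Sum.inr a, Sum.inr b] =>
      (if (iotaMid ws h a b).2 = 0 then [Sum.inr h.1.1] else []) ++
      (if h.2.2.2 = 0 then [Sum.inr (iotaMid ws h a b).1] else [])
  | [Sum.inr _, Sum.inl m] => (if m.1.2 = 0 then [Sum.inr h.1.1] else []) ++ [Sum.inl m]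
  | [Sum.inl m, Sum.inr _] => [Sum.inl m] ++ (if h.2.2.2 = 0 then [Sum.inr m.2.2.1] else [])
  | other => other.map (Sum.map id (fun _ => 0))

/-- the map `ι : Δ^∩ → Δ^⋈` -/
noncomputable def iota (ws : List (List T)) (p : CProd (NI N) T) : CProd (NI N) ℕ :=
  (p.1, iotaRhs ws p.1 p.2)

/-- the grammar `G^⋈`, whose terminals are the (0-indexed) letters `a₁, …, a_d`
represented by natural numbers -/
noncomputable def GBow (G : CFG N T) (ws : List (List T)) : CFG (NI N) ℕ :=
  ⟨iota ws '' DeltaI G ws⟩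

end Paper

namespace Paper

variable {N A : Type}

/-- `Ξ̂`: nonterminals producing some word starting with `a₁` and some word ending
with `a_d` -/
def XiHat (G : CFG N A) (a1 ad : A) : Set N :=
  {Y | (∃ w ∈ Lang G Y, ∃ v, w = a1 :: v) ∧ (∃ w ∈ Lang G Y, ∃ v, w = v ++ [ad])}

/-- the grammar `G^♯` (here `S = Ξ̂`, and `Ξ̌` is its complement) -/
def GSharp (G : CFG N A) (S : Set N) : CFG N A :=
  ⟨{p | p ∈ G.prods ∧ p.1 ∉ S} ∪
   {p | p ∈ G.prods ∧ p.1 ∈ S ∧ ∃ (u : Word N A) (Xr : N) (v : Word N A),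
      Xr ∈ S ∧ p.2 = u ++ [Sum.inl Xr] ++ v}⟩

/-- the grammar `G_{i,w}` for a pivot production `piv` (here `S = Ξ̂`) -/
def GPivot (G : CFG N A) (S : Set N) (piv : CProd N A) : CFG N A :=
  ⟨{p | p ∈ G.prods ∧ p.1 ∉ S} ∪ {piv}⟩

/-- `G` is reduced for `X` -/
def Reduced (G : CFG N A) (X : N) : Prop :=
  ∀ Y : N, Y ≠ X → (LKY G ⊤ X (some Y)).Nonempty ∧ (Lang G Y).Nonempty

/-- `a₁* ⋯ a_d*` (given by the list `as`) is the minimal strict letter-bounded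
expression for `L_X(G)` -/
def MinimalLB (G : CFG N A) (X : N) (as : List A) : Prop :=
  Lang G X ⊆ letterLang as ∧ ∀ i < as.length, ¬ (Lang G X ⊆ letterLang (as.eraseIdx i))

/-- a symbol of `A ∪ {ε}` as a word -/
def optT (a : Option A) : Word N A := a.elim [] (fun x => [Sum.inr x])

/-- a symbol of `Ξ ∪ {ε}` as a word -/
def optN (y : Option N) : Word N A := y.elim [] (fun x => [Sum.inl x])

/-- `y ⇒^γ u_y` is a (possibly empty) `k`-index depth-first derivation, where
`y ∈ Ξ ∪ {ε}`; for `y = ε` the derivation is empty -/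
def optDFDer (H : CFG N A) (k : ℕ) (y : Option N) (γ : List (CProd N A)) : Prop :=
  match y with
  | some Y => ∃ w : List A, DFCtrlFrom H (k : ℕ∞) [Sum.inl Y] γ (tw w)
  | none => γ = []

/-- the grammar `G_k` with productions `X_i → X_{i-1} X_{i-1}` (1 ≤ i ≤ k) and `X_0 → a` -/
def Gk (k : ℕ) : CFG ℕ Unit :=
  ⟨{p | (∃ i, 1 ≤ i ∧ i ≤ k ∧ p = (i, [Sum.inl (i - 1), Sum.inl (i - 1)])) ∨
        p = (0, [Sum.inr ()])}⟩

end Paper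

namespace Paper

private lemma join_replicate_singleton {α : Type} (n : ℕ) (a : α) :
    (List.replicate n [a]).flatten = List.replicate n a := by
  induction n with
  | zero => rfl
  | succ n ih => simp [List.replicate_succ, ih]

private lemma mem_letterLang_nil {α : Type} {u : List α} :
    u ∈ letterLang ([] : List α) ↔ u = [] := by
  simp [letterLang, BLang, Set.mem_singleton_iff]

private lemma mem_letterLang_cons {α : Type} {u : List α} {c : α} {cs : List α} :
    u ∈ letterLang (c :: cs) ↔
      ∃ n v, v ∈ letterLang cs ∧ u = List.replicate n c ++ v := by
  simp [letterLang, BLang, join_replicate_singleton, Set.mem_setOf_eq]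

private lemma nil_mem_letterLang {α : Type} (cs : List α) : [] ∈ letterLang cs := by
  induction cs with
  | nil => simp [mem_letterLang_nil]
  | cons c cs ih => exact mem_letterLang_cons.mpr ⟨0, [], ih, rfl⟩

private lemma suffix_mem_letterLang {α : Type} {cs : List α} {w v : List α}
    (hw : w ∈ letterLang cs) (hv : v <:+ w) : v ∈ letterLang cs := by
  induction cs generalizing w v with
  | nil =>
    rw [mem_letterLang_nil] at hw ⊢
    subst hw
    simpa using List.IsSuffix.length_le hv
  | cons c cs ih =>
    rcases mem_letterLang_cons.mp hw with ⟨n, w', hw', rfl⟩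
    obtain ⟨t, ht⟩ := hv
    have hvd : v = (List.replicate n c).drop t.length ++ w'.drop (t.length - n) := by
      have := congrArg (List.drop t.length) ht
      simpa [List.drop_append] using this
    rcases le_or_gt n t.length with h | h
    · have : v <:+ w' := by
        rw [hvd, List.drop_replicate, Nat.sub_eq_zero_of_le h, List.replicate_zero,
          List.nil_append]
        exact List.drop_suffix _ _
      exact mem_letterLang_cons.mpr ⟨0, v, ih hw' this, by simp⟩
    · refine mem_letterLang_cons.mpr ⟨n - t.length, w', hw', ?_⟩
      rw [hvd, List.drop_replicate, Nat.sub_eq_zero_of_le h.le, List.drop_zero]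

private lemma prefix_mem_letterLang {α : Type} {cs : List α} {w u : List α}
    (hw : w ∈ letterLang cs) (hu : u <+: w) : u ∈ letterLang cs := by
  induction cs generalizing w u with
  | nil =>
    rw [mem_letterLang_nil] at hw ⊢
    subst hw
    simpa using List.IsPrefix.length_le hu
  | cons c cs ih =>
    rcases mem_letterLang_cons.mp hw with ⟨n, w', hw', rfl⟩
    have hut : u = (List.replicate n c).take u.length ++ w'.take (u.length - n) := by
      have h0 := List.prefix_iff_eq_take.mp hu
      rw [List.take_append, List.length_replicate] at h0
      exact h0
    rcases le_or_gt u.length n with h | h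
    · refine mem_letterLang_cons.mpr ⟨u.length, [], nil_mem_letterLang _, ?_⟩
      conv_lhs => rw [hut]
      rw [List.take_replicate, Nat.sub_eq_zero_of_le h, List.take_zero,
        min_eq_left h, List.append_nil]
    · refine mem_letterLang_cons.mpr ⟨n, w'.take (u.length - n),
        ih hw' (List.take_prefix _ _), ?_⟩
      conv_lhs => rw [hut]
      rw [List.take_replicate, min_eq_right h.le]

private lemma letterLang_snoc {α : Type} {cs : List α} {c : α} {u : List α}
    (h : u ∈ letterLang (cs ++ [c])) :
    ∃ n u', u' ∈ letterLang cs ∧ u = u' ++ List.replicate n c := by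
  induction cs generalizing u with
  | nil =>
    rcases mem_letterLang_cons.mp h with ⟨n, v, hv, rfl⟩
    rw [mem_letterLang_nil] at hv
    subst hv
    exact ⟨n, [], nil_mem_letterLang _, by simp⟩
  | cons d ds ih =>
    rw [List.cons_append] at h
    rcases mem_letterLang_cons.mp h with ⟨m, v, hv, rfl⟩
    rcases ih hv with ⟨n, u', hu', rfl⟩
    exact ⟨n, List.replicate m d ++ u',
      mem_letterLang_cons.mpr ⟨m, u', hu', rfl⟩, by simp⟩

private lemma letterLang_split_at {α : Type} {bs : List α} (hnd : bs.Nodup)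
    {k : ℕ} {b : α} {x v : List α}
    (hk : bs[k]? = some b) (h : x ++ b :: v ∈ letterLang bs) :
    v ∈ letterLang (bs.drop k) := by
  induction bs generalizing k x with
  | nil => simp at hk
  | cons c cs ih =>
    cases k with
    | zero =>
      exact suffix_mem_letterLang h ⟨x ++ [b], by simp⟩
    | succ k =>
      simp only [List.getElem?_cons_succ] at hk
      have hb : b ∈ cs := by
        obtain ⟨hlt', rfl⟩ := List.getElem?_eq_some_iff.mp hk
        exact List.getElem_mem hlt'
      have hbc : b ≠ c := fun e => (List.nodup_cons.mp hnd).1 (e ▸ hb)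
      rcases mem_letterLang_cons.mp h with ⟨n, w', hw', heq⟩
      have hlen : n ≤ x.length := by
        by_contra hlt
        push_neg at hlt
        have h1 : (x ++ b :: v)[x.length]? = some b := by
          rw [List.getElem?_append_right le_rfl, Nat.sub_self]
          simp
        have h2 : (List.replicate n c ++ w')[x.length]? = some c := by
          rw [List.getElem?_append_left (by simpa using hlt)]
          simp [List.getElem?_replicate, hlt]
        rw [heq, h2] at h1
        exact hbc (Option.some_injective _ h1).symm
      have hw : w' = x.drop n ++ b :: v := by
        have := congrArg (List.drop n) heq
        rw [List.drop_append, List.drop_append,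
          List.drop_replicate, Nat.sub_self, List.length_replicate, Nat.sub_self,
          Nat.sub_eq_zero_of_le hlen] at this
        simpa using this.symm
      have := ih (List.nodup_cons.mp hnd).2 hk (hw ▸ hw')
      simpa using this

private lemma split_core {α : Type} {bs : List α} (hnd : bs.Nodup) (hne : bs ≠ [])
    {L1 L2 : Set (List α)} (h1 : L1.Nonempty) (h2 : L2.Nonempty)
    (hcat : ∀ u ∈ L1, ∀ v ∈ L2, u ++ v ∈ letterLang bs) :
    ∃ k, k < bs.length ∧ (∀ u ∈ L1, u ∈ letterLang (bs.take (k+1))) ∧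
      (∀ v ∈ L2, v ∈ letterLang (bs.drop k)) := by
  classical
  have hL1 : ∀ u ∈ L1, u ∈ letterLang bs := by
    intro u hu
    obtain ⟨v, hv⟩ := h2
    exact prefix_mem_letterLang (hcat u hu v hv) ⟨v, rfl⟩
  have hlen : 0 < bs.length := List.length_pos_iff.mpr hne
  have hex : ∃ k, ∀ u ∈ L1, u ∈ letterLang (bs.take (k+1)) :=
    ⟨bs.length - 1, by rw [Nat.sub_add_cancel hlen, List.take_length]; exact hL1⟩
  set k0 := Nat.find hex with hk0def
  have hk0 : ∀ u ∈ L1, u ∈ letterLang (bs.take (k0+1)) := Nat.find_spec hex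
  have hk0le : k0 ≤ bs.length - 1 := Nat.find_min' hex
    (by rw [Nat.sub_add_cancel hlen, List.take_length]; exact hL1)
  refine ⟨k0, by omega, hk0, ?_⟩
  intro v hv
  rcases Nat.eq_zero_or_pos k0 with hz | hpos
  · obtain ⟨u, hu⟩ := h1
    rw [hz, List.drop_zero]
    exact suffix_mem_letterLang (hcat u hu v hv) ⟨u, rfl⟩
  · have hmin : ¬ ∀ u ∈ L1, u ∈ letterLang (bs.take ((k0 - 1) + 1)) :=
      Nat.find_min hex (by omega)
    rw [Nat.sub_add_cancel hpos] at hmin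
    push_neg at hmin
    obtain ⟨u, hu, hun⟩ := hmin
    have hk0lt : k0 < bs.length := by omega
    obtain ⟨b, hb⟩ : ∃ b, bs[k0]? = some b := ⟨bs[k0], List.getElem?_eq_getElem hk0lt⟩
    have htake : bs.take (k0+1) = bs.take k0 ++ [b] := by
      rw [List.take_succ, hb]; rfl
    obtain ⟨n, u', hu', hequ⟩ := letterLang_snoc (htake ▸ hk0 u hu)
    have hn : n ≠ 0 := by
      rintro rfl
      simp only [List.replicate_zero, List.append_nil] at hequ
      exact hun (hequ ▸ hu')
    obtain ⟨m, rfl⟩ := Nat.exists_eq_succ_of_ne_zero hn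
    have heq2 : u ++ v = (u' ++ List.replicate m b) ++ b :: v := by
      rw [hequ, List.replicate_succ']
      simp
    exact letterLang_split_at hnd hb (heq2 ▸ hcat u hu v hv)

/-- fact (v) in the proof of Lemma 3: if `L₁, L₂` are nonempty
subsets of the strict letter-bounded language `a₁* ⋯ a_d*` (given by the
duplicate-free list `as`) and `L₁·L₂ ⊆ a_ℓ* ⋯ a_r*` (0-indexed segment `l..r`),
then there is `q` with `l ≤ q ≤ r`, `L₁ ⊆ a_ℓ* ⋯ a_q*` and `L₂ ⊆ a_q* ⋯ a_r*`. -/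
theorem concat_letter_bounded_split {A : Type} (as : List A) (hstrict : as.Nodup)
    (L1 L2 : Set (List A)) (h1 : L1.Nonempty) (h2 : L2.Nonempty)
    (hb1 : L1 ⊆ letterLang as) (hb2 : L2 ⊆ letterLang as)
    (l r : ℕ) (hlr : l ≤ r) (hr : r < as.length)
    (hcat : {w | ∃ u ∈ L1, ∃ v ∈ L2, w = u ++ v} ⊆ segLang as l r) :
    ∃ q : ℕ, l ≤ q ∧ q ≤ r ∧ L1 ⊆ segLang as l q ∧ L2 ⊆ segLang as q r := by
  classical
  set bs : List A := (as.drop l).take (r - l + 1) with hbs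
  have hbslen : bs.length = r - l + 1 := by
    rw [hbs, List.length_take, List.length_drop]
    omega
  have hbsnd : bs.Nodup := ((as.drop l).take_sublist _).nodup ((as.drop_sublist l).nodup hstrict)
  have hbsne : bs ≠ [] := by
    intro h
    rw [h] at hbslen
    simp at hbslen
  have hcat' : ∀ u ∈ L1, ∀ v ∈ L2, u ++ v ∈ letterLang bs := by
    intro u hu v hv
    exact hcat ⟨u, hu, v, hv, rfl⟩
  obtain ⟨k, hk, hL1, hL2⟩ := split_core hbsnd hbsne h1 h2 hcat'
  have hkle : k ≤ r - l := by omega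
  refine ⟨l + k, by omega, by omega, ?_, ?_⟩
  · intro u hu
    have : segLang as l (l + k) = letterLang (bs.take (k + 1)) := by
      rw [segLang, hbs, List.take_take]
      have : l + k - l + 1 = min (k + 1) (r - l + 1) := by omega
      rw [this]
    rw [this]
    exact hL1 u hu
  · intro v hv
    have : segLang as (l + k) r = letterLang (bs.drop k) := by
      rw [segLang, hbs, List.drop_take, List.drop_drop]
      have : r - (l + k) + 1 = r - l + 1 - k := by omega
      rw [this]
    rw [this]
    exact hL2 v hv


end Paper
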